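/- Let G be a topological group and K a strongly neutral subgroup of G. Then the natural quotient map π : G → G/K onto the left coset space is a closed map (in addition to being open and continuous). -/

import Mathlib

open scoped Pointwise

/-- If `K` is a strongly neutral subgroup of a topological group `G`,
then the quotient map `G → G/K` is closed (in addition to open and continuous). -/
theorem stmt_1 {G : Type*} [Group G] [TopologicalSpace G] [IsTopologicalGroup G]
    (K : Subgroup G)
    (hK : ∀ O : Set G, IsOpen O → (K : Set G) ⊆ O →
      ∃ V : Set G, IsOpen V ∧ (1 : G) ∈ V ∧ (K : Set G) * V ⊆ O) :
    Continuous (QuotientGroup.mk : G → G ⧸ K) ∧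
      IsOpenMap (QuotientGroup.mk : G → G ⧸ K) ∧
      IsClosedMap (QuotientGroup.mk : G → G ⧸ K) := by
  refine ⟨continuous_quotient_mk', QuotientGroup.isOpenMap_coe, ?_⟩
  intro C hC
  rw [← (QuotientGroup.isQuotientMap_mk K).isClosed_preimage,
    QuotientGroup.preimage_image_mk_eq_mul, ← isOpen_compl_iff,
    isOpen_iff_forall_mem_open]
  intro x hx
  have hO : IsOpen {g : G | x * g⁻¹ ∈ Cᶜ} :=
    hC.isOpen_compl.preimage (by continuity)
  have hKO : (K : Set G) ⊆ {g : G | x * g⁻¹ ∈ Cᶜ} := by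
    intro k hk hc
    exact hx ⟨_, hc, k, hk, by group⟩
  obtain ⟨V, hVo, hV1, hKV⟩ := hK _ hO hKO
  refine ⟨x • V⁻¹, ?_, ?_, ?_⟩
  · rintro y ⟨v, hv, rfl⟩ ⟨c, hc, k, hk, hck⟩
    have hv' : v⁻¹ ∈ V := by simpa using hv
    have hm := hKV (Set.mul_mem_mul hk hv')
    simp only [Set.mem_setOf_eq, Set.mem_compl_iff] at hm
    apply hm
    have hce : c = x * (k * v⁻¹)⁻¹ := by
      have : c * k = x * v := hck
      rw [mul_inv_rev, inv_inv, ← mul_assoc, ← this, mul_assoc,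
        mul_inv_cancel, mul_one]
    rwa [← hce]
  · exact (hVo.inv).smul x
  · exact ⟨1⁻¹, by simpa using hV1, by simp⟩
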